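/- Consider the embedded M/G/1 queue chain: let (a_j)_{j≥0} be nonnegative reals with Σ_{j≥0} a_j = 1 and ρ := Σ_{j≥0} j·a_j < 1, and let P be the Markov kernel on ℕ given by P(0,y) = a_y, and for x ≥ 1, P(x,y) = a_{y−x+1} if y ≥ x−1 and P(x,y) = 0 otherwise. Let τ_0 = inf{n ≥ 1 : X_n = 0} be the first return time to 0. Then for every x ≥ 1, E_x[τ_0] = x/(1−ρ) < ∞, and E_0[τ_0] = 1/(1−ρ). -/

import Mathlib

open MeasureTheory ProbabilityTheory Filter
open scoped ENNReal ENat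

noncomputable section

/-- `μ` is the family of laws of the canonical Markov chain with kernel `K`. -/
structure IsMarkovChain (K : Kernel ℕ ℕ) (μ : ℕ → Measure (ℕ → ℕ)) : Prop where
  isProb : ∀ x, IsProbabilityMeasure (μ x)
  init : ∀ x, (μ x).map (fun ω => ω 0) = Measure.dirac x
  markov : ∀ (x : ℕ) (n : ℕ) (g : (ℕ → ℕ) → ℝ≥0∞) (f : ℕ → ℝ≥0∞),
      Measurable[MeasurableSpace.comap (fun ω (i : Fin (n + 1)) => ω i) inferInstance] g →
      Measurable f →
      ∫⁻ ω, g ω * f (ω (n + 1)) ∂(μ x) = ∫⁻ ω, g ω * ∫⁻ z, f z ∂(K (ω n)) ∂(μ x)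

/-- First return time to `0`: `τ₀ = inf{n ≥ 1 : ω n = 0}` (with `inf ∅ = ⊤`). -/
def ret (ω : ℕ → ℕ) : ℕ∞ :=
  sInf ((fun k : ℕ => (k : ℕ∞)) '' {k | 1 ≤ k ∧ ω k = 0})

namespace Stmt19Aux

open scoped Topology

/-- indicator of survival up to time n, as function on finitely many coords -/
def indF (n : ℕ) (v : Fin (n + 1) → ℕ) : ℝ≥0∞ :=
  if ∀ k : Fin (n + 1), 1 ≤ (k : ℕ) → v k ≠ 0 then 1 else 0

/-- indicator of survival up to time n -/
def ind (n : ℕ) (ω : ℕ → ℕ) : ℝ≥0∞ := indF n (fun i => ω i)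

lemma ind_eq (n : ℕ) (ω : ℕ → ℕ) : ind n ω = indF n (fun i => ω i) := rfl

lemma ind_one {n : ℕ} {ω : ℕ → ℕ} (h : ∀ k, 1 ≤ k → k ≤ n → ω k ≠ 0) : ind n ω = 1 := by
  unfold ind indF
  rw [if_pos]
  intro k hk
  exact h k hk (Nat.lt_succ_iff.mp k.isLt)

lemma ind_zero {n : ℕ} {ω : ℕ → ℕ} (h : ¬ ∀ k, 1 ≤ k → k ≤ n → ω k ≠ 0) : ind n ω = 0 := by
  unfold ind indF
  rw [if_neg]
  intro hF
  exact h (fun k hk1 hk2 => hF ⟨k, Nat.lt_succ_iff.mpr hk2⟩ hk1)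

lemma ind_le_one (n : ℕ) (ω : ℕ → ℕ) : ind n ω ≤ 1 := by
  by_cases h : ∀ k, 1 ≤ k → k ≤ n → ω k ≠ 0
  · rw [ind_one h]
  · rw [ind_zero h]; exact zero_le_one

lemma meas_ind (n : ℕ) : Measurable (ind n) := by
  have : ind n = (indF n) ∘ (fun ω (i : Fin (n + 1)) => ω i) := funext (ind_eq n)
  rw [this]
  exact (measurable_of_countable _).comp (measurable_pi_lambda _ fun i => measurable_pi_apply (i:ℕ))

lemma meas_coord (n : ℕ) : Measurable (fun ω : ℕ → ℕ => ((ω n : ℕ) : ℝ≥0∞)) :=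
  (measurable_of_countable _).comp (measurable_pi_apply n)

lemma markov' {P : Kernel ℕ ℕ} {μ : ℕ → Measure (ℕ → ℕ)} (hμ : IsMarkovChain P μ)
    (x n : ℕ) (G : (Fin (n + 1) → ℕ) → ℝ≥0∞) (f : ℕ → ℝ≥0∞) :
    ∫⁻ ω, G (fun i => ω i) * f (ω (n + 1)) ∂(μ x)
      = ∫⁻ ω, G (fun i => ω i) * ∫⁻ z, f z ∂(P (ω n)) ∂(μ x) := by
  refine hμ.markov x n (fun ω => G (fun i => ω i)) f ?_ (measurable_of_countable f)
  intro s hs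
  exact MeasurableSpace.measurableSet_comap.mpr ⟨G ⁻¹' s, measurable_of_countable G hs, rfl⟩

lemma lint_init {P : Kernel ℕ ℕ} {μ : ℕ → Measure (ℕ → ℕ)} (hμ : IsMarkovChain P μ)
    (x : ℕ) (h : ℕ → ℝ≥0∞) : ∫⁻ ω, h (ω 0) ∂(μ x) = h x := by
  rw [← lintegral_map (measurable_of_countable h) (measurable_pi_apply 0), hμ.init x,
    lintegral_dirac]


lemma ret_top_iff (ω : ℕ → ℕ) : ret ω = ⊤ ↔ ∀ k, 1 ≤ k → ω k ≠ 0 := by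
  rw [ret, sInf_eq_top]
  constructor
  · intro h k hk1 hk0
    have : ((k : ℕ∞)) = ⊤ := h _ ⟨k, ⟨hk1, hk0⟩, rfl⟩
    exact (ENat.coe_ne_top k) this
  · rintro h b ⟨k, ⟨hk1, hk0⟩, rfl⟩
    exact absurd hk0 (h k hk1)

lemma ret_eq_sInf {ω : ℕ → ℕ} (hne : {k : ℕ | 1 ≤ k ∧ ω k = 0}.Nonempty) :
    ret ω = ((sInf {k : ℕ | 1 ≤ k ∧ ω k = 0} : ℕ) : ℕ∞) := by
  apply le_antisymm
  · exact sInf_le ⟨_, Nat.sInf_mem hne, rfl⟩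
  · refine le_sInf ?_
    rintro b ⟨k, hk, rfl⟩
    simpa using (Nat.cast_le (α := ℕ∞)).mpr (Nat.sInf_le hk)

lemma retsum (ω : ℕ → ℕ) : ((ret ω : ℕ∞) : ℝ≥0∞) = ∑' n, ind n ω := by
  by_cases hω : ∀ k, 1 ≤ k → ω k ≠ 0
  · rw [(ret_top_iff ω).mpr hω]
    have h1 : ∀ n, ind n ω = 1 := fun n => ind_one (fun k hk _ => hω k hk)
    simp only [h1, ENat.toENNReal_top]
    refine (ENNReal.tsum_const_eq_top_of_ne_zero one_ne_zero).symm
  · have hne : {k : ℕ | 1 ≤ k ∧ ω k = 0}.Nonempty := by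
      push_neg at hω
      obtain ⟨k, hk1, hk0⟩ := hω
      exact ⟨k, hk1, hk0⟩
    set M := sInf {k : ℕ | 1 ≤ k ∧ ω k = 0} with hM
    have hMmem := Nat.sInf_mem hne
    rw [ret_eq_sInf hne, ← hM, ENat.toENNReal_coe]
    rw [tsum_eq_sum (s := Finset.range M) (fun n hn => ?_)]
    · rw [Finset.sum_congr rfl (fun n hn => ?_), Finset.sum_const, Finset.card_range,
        nsmul_eq_mul, mul_one]
      refine ind_one (fun k hk1 hkn hk0 => ?_)
      have : M ≤ k := Nat.sInf_le ⟨hk1, hk0⟩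
      have hn' := Finset.mem_range.mp hn
      omega
    · refine ind_zero (fun hall => ?_)
      have hn' : ¬ n < M := fun h => hn (Finset.mem_range.mpr h)
      exact hall M hMmem.1 (by omega) hMmem.2


section Kernel

variable {a : ℕ → ℝ} {P : Kernel ℕ ℕ}

lemma summable_a (ha : ∀ j, 0 ≤ a j) (hsum : ∑' j, a j = 1) : Summable a := by
  by_contra h
  rw [tsum_eq_zero_of_not_summable h] at hsum
  norm_num at hsum

lemma tsum_ofReal_a (ha : ∀ j, 0 ≤ a j) (hsum : ∑' j, a j = 1) :
    ∑' j, ENNReal.ofReal (a j) = 1 := by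
  rw [← ENNReal.ofReal_tsum_of_nonneg ha (summable_a ha hsum), hsum, ENNReal.ofReal_one]

lemma tsum_cast_mul (ha : ∀ j, 0 ≤ a j)
    (hsummable : Summable fun j => ((j : ℕ) : ℝ) * a j) :
    ∑' j : ℕ, (j : ℝ≥0∞) * ENNReal.ofReal (a j) = ENNReal.ofReal (∑' j : ℕ, (j : ℝ) * a j) := by
  rw [ENNReal.ofReal_tsum_of_nonneg (fun j => mul_nonneg (Nat.cast_nonneg j) (ha j)) hsummable]
  refine tsum_congr (fun j => ?_)
  rw [ENNReal.ofReal_mul (Nat.cast_nonneg j), ENNReal.ofReal_natCast]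

lemma kmean0 (ha : ∀ j, 0 ≤ a j) (hsummable : Summable fun j => ((j : ℕ) : ℝ) * a j)
    (hP0 : ∀ y : ℕ, P 0 {y} = ENNReal.ofReal (a y)) :
    ∫⁻ z, (z : ℝ≥0∞) ∂(P 0) = ENNReal.ofReal (∑' j : ℕ, (j : ℝ) * a j) := by
  rw [lintegral_countable']
  simp only [hP0]
  exact tsum_cast_mul ha hsummable

lemma shift_inj (c : ℕ) : Function.Injective (fun j : ℕ => j + c) :=
  add_left_injective c

lemma kshift (ha : ∀ j, 0 ≤ a j) (hsummable : Summable fun j => ((j : ℕ) : ℝ) * a j)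
    (hP : ∀ x : ℕ, 1 ≤ x → ∀ y : ℕ,
      P x {y} = if x ≤ y + 1 then ENNReal.ofReal (a (y + 1 - x)) else 0)
    (m : ℕ) (hm : 1 ≤ m) :
    ∫⁻ z, (((z + 1 - m : ℕ)) : ℝ≥0∞) ∂(P m) = ENNReal.ofReal (∑' j : ℕ, (j : ℝ) * a j) := by
  rw [lintegral_countable']
  rw [← Function.Injective.tsum_eq (g := fun j : ℕ => j + (m - 1)) (shift_inj (m - 1)) ?_]
  · rw [← tsum_cast_mul ha hsummable]
    refine tsum_congr (fun j => ?_)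
    have e1 : j + (m - 1) + 1 - m = j := by omega
    rw [hP m hm, if_pos (by omega), e1]
  · intro y hy
    rcases le_or_gt (m - 1) y with h | h
    · exact ⟨y - (m - 1), by show y - (m - 1) + (m - 1) = y; omega⟩
    · refine absurd ?_ hy
      show ((y + 1 - m : ℕ) : ℝ≥0∞) * P m {y} = 0
      rw [hP m hm, if_neg (by omega), mul_zero]

lemma kmean1 (ha : ∀ j, 0 ≤ a j) (hsum : ∑' j, a j = 1)
    (hsummable : Summable fun j => ((j : ℕ) : ℝ) * a j)
    (hρ : (∑' j : ℕ, (j : ℝ) * a j) < 1)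
    (hP : ∀ x : ℕ, 1 ≤ x → ∀ y : ℕ,
      P x {y} = if x ≤ y + 1 then ENNReal.ofReal (a (y + 1 - x)) else 0)
    (m : ℕ) (hm : 1 ≤ m) :
    (∫⁻ z, (z : ℝ≥0∞) ∂(P m)) + ENNReal.ofReal (1 - ∑' j : ℕ, (j : ℝ) * a j) = (m : ℝ≥0∞) := by
  have hρ0 : 0 ≤ ∑' j : ℕ, (j : ℝ) * a j :=
    tsum_nonneg (fun j => mul_nonneg (Nat.cast_nonneg j) (ha j))
  have hmean : ∫⁻ z, (z : ℝ≥0∞) ∂(P m)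
      = ENNReal.ofReal (∑' j : ℕ, (j : ℝ) * a j) + ((m - 1 : ℕ) : ℝ≥0∞) := by
    rw [lintegral_countable']
    rw [← Function.Injective.tsum_eq (g := fun j : ℕ => j + (m - 1)) (shift_inj (m - 1)) ?_]
    · have hterm : ∀ j : ℕ, ((j + (m - 1) : ℕ) : ℝ≥0∞) * P m {j + (m - 1)}
          = (j : ℝ≥0∞) * ENNReal.ofReal (a j) + ((m - 1 : ℕ) : ℝ≥0∞) * ENNReal.ofReal (a j) := by
        intro j
        rw [hP m hm, if_pos (by omega)]
        have : (j + (m - 1) + 1 - m : ℕ) = j := by omega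
        rw [this, Nat.cast_add, add_mul]
      rw [tsum_congr hterm, ENNReal.tsum_add, ENNReal.tsum_mul_left,
        tsum_cast_mul ha hsummable, tsum_ofReal_a ha hsum, mul_one]
    · intro y hy
      rcases le_or_gt (m - 1) y with h | h
      · exact ⟨y - (m - 1), by show y - (m - 1) + (m - 1) = y; omega⟩
      · refine absurd ?_ hy
        show ((y : ℕ) : ℝ≥0∞) * P m {y} = 0
        rw [hP m hm, if_neg (by omega), mul_zero]
  have hor : ENNReal.ofReal (1 - ∑' j : ℕ, (j : ℝ) * a j)
      + ENNReal.ofReal (∑' j : ℕ, (j : ℝ) * a j) = 1 := by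
    rw [← ENNReal.ofReal_add (by linarith) hρ0]
    norm_num
  rw [hmean]
  calc ENNReal.ofReal (∑' j : ℕ, (j : ℝ) * a j) + ((m - 1 : ℕ) : ℝ≥0∞)
        + ENNReal.ofReal (1 - ∑' j : ℕ, (j : ℝ) * a j)
      = ((m - 1 : ℕ) : ℝ≥0∞) + (ENNReal.ofReal (1 - ∑' j : ℕ, (j : ℝ) * a j)
        + ENNReal.ofReal (∑' j : ℕ, (j : ℝ) * a j)) := by ring
    _ = ((m - 1 : ℕ) : ℝ≥0∞) + 1 := by rw [hor]
    _ = (m : ℝ≥0∞) := by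
        exact_mod_cast congrArg (Nat.cast : ℕ → ℝ≥0∞) (by omega : m - 1 + 1 = m)

end Kernel


section Chain

variable {a : ℕ → ℝ} {P : Kernel ℕ ℕ} {μ : ℕ → Measure (ℕ → ℕ)}

/-- mean of the kernel at `y` -/
def meanK (P : Kernel ℕ ℕ) (y : ℕ) : ℝ≥0∞ := ∫⁻ z, (z : ℝ≥0∞) ∂(P y)

lemma meas_meanK : Measurable (fun ω : ℕ → ℕ => meanK P (ω n)) :=
  (measurable_of_countable (meanK P)).comp (measurable_pi_apply n)

lemma stepA (hμ : IsMarkovChain P μ) (x n : ℕ) :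
    ∫⁻ ω, ind (n + 1) ω * (ω (n + 1) : ℝ≥0∞) ∂(μ x)
      = ∫⁻ ω, ind n ω * meanK P (ω n) ∂(μ x) := by
  have h1 : ∀ ω : ℕ → ℕ,
      ind (n + 1) ω * (ω (n + 1) : ℝ≥0∞) = ind n ω * (ω (n + 1) : ℝ≥0∞) := by
    intro ω
    by_cases h : ω (n + 1) = 0
    · rw [h]; simp
    · by_cases h2 : ∀ k, 1 ≤ k → k ≤ n → ω k ≠ 0
      · rw [ind_one h2, ind_one ?_]
        intro k hk1 hk2
        rcases eq_or_ne k (n + 1) with h3 | h3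
        · rw [h3]; exact h
        · exact h2 k hk1 (by omega)
      · rw [ind_zero h2, ind_zero ?_]
        intro hall
        exact h2 (fun k hk1 hk2 => hall k hk1 (by omega))
  rw [lintegral_congr h1]
  exact markov' hμ x n (indF n) (fun z => (z : ℝ≥0∞))

lemma stepB (ha : ∀ j, 0 ≤ a j) (hsum : ∑' j, a j = 1)
    (hsummable : Summable fun j => ((j : ℕ) : ℝ) * a j)
    (hρ : (∑' j : ℕ, (j : ℝ) * a j) < 1)
    (hP : ∀ x : ℕ, 1 ≤ x → ∀ y : ℕ,
      P x {y} = if x ≤ y + 1 then ENNReal.ofReal (a (y + 1 - x)) else 0)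
    (hμ : IsMarkovChain P μ) (x n : ℕ) (hn : 1 ≤ n) :
    ∫⁻ ω, ind (n + 1) ω * (ω (n + 1) : ℝ≥0∞) ∂(μ x)
      + ENNReal.ofReal (1 - ∑' j : ℕ, (j : ℝ) * a j) * ∫⁻ ω, ind n ω ∂(μ x)
      = ∫⁻ ω, ind n ω * (ω n : ℝ≥0∞) ∂(μ x) := by
  rw [stepA hμ x n, ← lintegral_const_mul _ (meas_ind n),
    ← lintegral_add_left (f := fun ω => ind n ω * meanK P (ω n)) ((meas_ind n).mul meas_meanK)]
  refine lintegral_congr (fun ω => ?_)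
  by_cases h : ∀ k, 1 ≤ k → k ≤ n → ω k ≠ 0
  · rw [ind_one h]
    simp only [one_mul, mul_one]
    exact kmean1 ha hsum hsummable hρ hP (ω n) (Nat.one_le_iff_ne_zero.mpr (h n hn le_rfl))
  · rw [ind_zero h]
    simp

lemma ind_zero_eq_one (ω : ℕ → ℕ) : ind 0 ω = 1 :=
  ind_one (fun k hk1 hk2 => by omega)

lemma eP_zero (hμ : IsMarkovChain P μ) (x : ℕ) :
    ∫⁻ ω, ind 0 ω * (ω 0 : ℝ≥0∞) ∂(μ x) = (x : ℝ≥0∞) := by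
  have h1 : ∀ ω : ℕ → ℕ, ind 0 ω * (ω 0 : ℝ≥0∞) = (fun y : ℕ => (y : ℝ≥0∞)) (ω 0) := by
    intro ω
    rw [ind_zero_eq_one, one_mul]
  rw [lintegral_congr h1, lint_init hμ]

lemma eP_one (hμ : IsMarkovChain P μ) (x : ℕ) :
    ∫⁻ ω, ind 1 ω * (ω 1 : ℝ≥0∞) ∂(μ x) = meanK P x := by
  rw [stepA hμ x 0]
  have h1 : ∀ ω : ℕ → ℕ, ind 0 ω * meanK P (ω 0) = (fun y : ℕ => meanK P y) (ω 0) := by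
    intro ω
    rw [ind_zero_eq_one, one_mul]
  rw [lintegral_congr h1, lint_init hμ]

lemma pP_zero (hμ : IsMarkovChain P μ) (x : ℕ) :
    ∫⁻ ω, ind 0 ω ∂(μ x) = 1 := by
  haveI := hμ.isProb x
  rw [lintegral_congr ind_zero_eq_one, lintegral_one, measure_univ]

lemma pP_le_one (hμ : IsMarkovChain P μ) (x n : ℕ) :
    ∫⁻ ω, ind n ω ∂(μ x) ≤ 1 := by
  haveI := hμ.isProb x
  calc ∫⁻ ω, ind n ω ∂(μ x) ≤ ∫⁻ _, 1 ∂(μ x) := lintegral_mono (ind_le_one n)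
    _ = 1 := by rw [lintegral_one, measure_univ]

end Chain


section Inc

variable {a : ℕ → ℝ} {P : Kernel ℕ ℕ} {μ : ℕ → Measure (ℕ → ℕ)}

lemma meas_proj (n : ℕ) : Measurable (fun ω : ℕ → ℕ => (fun i : Fin (n + 1) => ω i)) :=
  measurable_pi_lambda _ fun i => measurable_pi_apply (i : ℕ)

lemma inc_bound (ha : ∀ j, 0 ≤ a j)
    (hsummable : Summable fun j => ((j : ℕ) : ℝ) * a j)
    (hP : ∀ x : ℕ, 1 ≤ x → ∀ y : ℕ,
      P x {y} = if x ≤ y + 1 then ENNReal.ofReal (a (y + 1 - x)) else 0)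
    (hμ : IsMarkovChain P μ) (x k : ℕ) :
    ∫⁻ ω, ind (k + 1) ω * ((ω (k + 2) + 1 - ω (k + 1) : ℕ) : ℝ≥0∞) ∂(μ x)
      = ENNReal.ofReal (∑' j : ℕ, (j : ℝ) * a j) * ∫⁻ ω, ind (k + 1) ω ∂(μ x) := by
  set G : ℕ → (Fin (k + 2) → ℕ) → ℝ≥0∞ :=
    fun m v => indF (k + 1) v * (if v (Fin.last (k + 1)) = m then 1 else 0) with hG
  have hGproj : ∀ (m : ℕ) (ω : ℕ → ℕ),
      G m (fun i => ω i) = ind (k + 1) ω * (if ω (k + 1) = m then 1 else 0) := fun m ω => rfl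
  have hpt : ∀ ω : ℕ → ℕ, ind (k + 1) ω * ((ω (k + 2) + 1 - ω (k + 1) : ℕ) : ℝ≥0∞)
      = ∑' m : ℕ, G m (fun i => ω i) * ((ω (k + 2) + 1 - m : ℕ) : ℝ≥0∞) := by
    intro ω
    rw [tsum_eq_single (ω (k + 1)) ?_]
    · rw [hGproj, if_pos rfl, mul_one]
    · intro m hm
      rw [hGproj, if_neg (fun h => hm h.symm), mul_zero, zero_mul]
  have hGm : ∀ m : ℕ, Measurable (fun ω : ℕ → ℕ => G m (fun i => ω i)) :=
    fun m => (measurable_of_countable (G m)).comp (meas_proj (k + 1))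
  have hmeas1 : ∀ m : ℕ, Measurable (fun ω : ℕ → ℕ =>
      G m (fun i => ω i) * ((ω (k + 2) + 1 - m : ℕ) : ℝ≥0∞)) := by
    intro m
    exact (hGm m).mul
      ((measurable_of_countable (fun y : ℕ => ((y + 1 - m : ℕ) : ℝ≥0∞))).comp
        (measurable_pi_apply (k + 2)))
  rw [lintegral_congr hpt, lintegral_tsum (fun m => (hmeas1 m).aemeasurable)]
  have hstep : ∀ m : ℕ, ∫⁻ ω, G m (fun i => ω i) * ((ω (k + 2) + 1 - m : ℕ) : ℝ≥0∞) ∂(μ x)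
      = ENNReal.ofReal (∑' j : ℕ, (j : ℝ) * a j) * ∫⁻ ω, G m (fun i => ω i) ∂(μ x) := by
    intro m
    have h1 := markov' hμ x (k + 1) (G m) (fun z => ((z + 1 - m : ℕ) : ℝ≥0∞))
    rw [h1]
    rw [← lintegral_const_mul _ (hGm m)]
    refine lintegral_congr (fun ω => ?_)
    by_cases hm0 : ω (k + 1) = m
    · rcases Nat.eq_zero_or_pos m with hz | hz
      · have hzero : G m (fun i => ω i) = 0 := by
          rw [hGproj]
          by_cases hc : ∀ k', 1 ≤ k' → k' ≤ k + 1 → ω k' ≠ 0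
          · exact absurd (hm0.trans hz) (hc (k + 1) (by omega) le_rfl)
          · rw [ind_zero hc, zero_mul]
        rw [hzero, zero_mul, mul_zero]
      · rw [hm0, kshift ha hsummable hP m hz, mul_comm]
    · have hzero : G m (fun i => ω i) = 0 := by
        rw [hGproj, if_neg hm0, mul_zero]
      rw [hzero, zero_mul, mul_zero]
  rw [tsum_congr hstep, ENNReal.tsum_mul_left]
  congr 1
  rw [← lintegral_tsum (fun m => (hGm m).aemeasurable)]
  refine lintegral_congr (fun ω => ?_)
  rw [tsum_eq_single (ω (k + 1)) ?_]
  · rw [hGproj, if_pos rfl, mul_one]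
  · intro m hm
    rw [hGproj, if_neg (fun h => hm h.symm), mul_zero]

lemma dom (ω : ℕ → ℕ) (n : ℕ) :
    ind (n + 1) ω * (ω (n + 1) : ℝ≥0∞)
      ≤ (ω 1 : ℝ≥0∞) + ∑' k : ℕ, ind (k + 1) ω * ((ω (k + 2) + 1 - ω (k + 1) : ℕ) : ℝ≥0∞) := by
  have key : ∀ n : ℕ, ind (n + 1) ω * (ω (n + 1) : ℝ≥0∞) ≤ (ω 1 : ℝ≥0∞)
      + ∑ k ∈ Finset.range n, ind (k + 1) ω * ((ω (k + 2) + 1 - ω (k + 1) : ℕ) : ℝ≥0∞) := by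
    intro n
    induction n with
    | zero =>
      simpa using mul_le_of_le_one_left zero_le (ind_le_one 1 ω)
    | succ n ih =>
      by_cases h : ∀ k', 1 ≤ k' → k' ≤ n + 2 → ω k' ≠ 0
      · have h1 : ind (n + 2) ω = 1 := ind_one h
        have h2 : ind (n + 1) ω = 1 := ind_one (fun k' hk1 hk2 => h k' hk1 (by omega))
        rw [h1, one_mul, Finset.sum_range_succ, ← add_assoc]
        calc (ω (n + 2) : ℝ≥0∞)
            ≤ (ω (n + 1) : ℝ≥0∞) + ((ω (n + 2) + 1 - ω (n + 1) : ℕ) : ℝ≥0∞) := by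
              have hn : ω (n + 2) ≤ ω (n + 1) + (ω (n + 2) + 1 - ω (n + 1)) := by omega
              calc (ω (n + 2) : ℝ≥0∞)
                  ≤ ((ω (n + 1) + (ω (n + 2) + 1 - ω (n + 1)) : ℕ) : ℝ≥0∞) :=
                    Nat.cast_le.mpr hn
                _ = _ := by push_cast; ring
          _ = ind (n + 1) ω * (ω (n + 1) : ℝ≥0∞)
              + ind (n + 1) ω * ((ω (n + 2) + 1 - ω (n + 1) : ℕ) : ℝ≥0∞) := by
              rw [h2, one_mul, one_mul]
          _ ≤ ((ω 1 : ℝ≥0∞)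
              + ∑ k ∈ Finset.range n, ind (k + 1) ω * ((ω (k + 2) + 1 - ω (k + 1) : ℕ) : ℝ≥0∞))
              + ind (n + 1) ω * ((ω (n + 2) + 1 - ω (n + 1) : ℕ) : ℝ≥0∞) :=
            add_le_add_left ih _
      · rw [ind_zero h, zero_mul]
        exact zero_le
  exact le_trans (key n) (add_le_add_right (ENNReal.sum_le_tsum _) _)

end Inc


section Master

variable {a : ℕ → ℝ} {P : Kernel ℕ ℕ} {μ : ℕ → Measure (ℕ → ℕ)}

lemma master (ha : ∀ j, 0 ≤ a j) (hsum : ∑' j, a j = 1)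
    (hsummable : Summable fun j => ((j : ℕ) : ℝ) * a j)
    (hρ : (∑' j : ℕ, (j : ℝ) * a j) < 1)
    (hP : ∀ x : ℕ, 1 ≤ x → ∀ y : ℕ,
      P x {y} = if x ≤ y + 1 then ENNReal.ofReal (a (y + 1 - x)) else 0)
    (hμ : IsMarkovChain P μ) (x : ℕ) (hmtop : meanK P x ≠ ⊤) :
    ENNReal.ofReal (1 - ∑' j : ℕ, (j : ℝ) * a j) * ∫⁻ ω, ((ret ω : ℕ∞) : ℝ≥0∞) ∂(μ x)
      = ENNReal.ofReal (1 - ∑' j : ℕ, (j : ℝ) * a j) + meanK P x := by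
  have hρ0 : 0 ≤ ∑' j : ℕ, (j : ℝ) * a j :=
    tsum_nonneg (fun j => mul_nonneg (Nat.cast_nonneg j) (ha j))
  set o : ℝ≥0∞ := ENNReal.ofReal (1 - ∑' j : ℕ, (j : ℝ) * a j) with ho
  set r : ℝ≥0∞ := ENNReal.ofReal (∑' j : ℕ, (j : ℝ) * a j) with hr
  have ho0 : o ≠ 0 := (ENNReal.ofReal_pos.mpr (by linarith)).ne'
  have hoT : o ≠ ⊤ := ENNReal.ofReal_ne_top
  have hrT : r ≠ ⊤ := ENNReal.ofReal_ne_top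
  -- the key recursion, summed
  have hkey : ∀ N : ℕ, (∫⁻ ω, ind (N + 1) ω * (ω (N + 1) : ℝ≥0∞) ∂(μ x))
      + o * ∑ k ∈ Finset.range N, ∫⁻ ω, ind (k + 1) ω ∂(μ x)
      = ∫⁻ ω, ind 1 ω * (ω 1 : ℝ≥0∞) ∂(μ x) := by
    intro N
    induction N with
    | zero => simp
    | succ N ih =>
      rw [Finset.sum_range_succ, mul_add,
        add_comm (o * ∑ k ∈ Finset.range N, ∫⁻ ω, ind (k + 1) ω ∂(μ x)) _, ← add_assoc,
        stepB ha hsum hsummable hρ hP hμ x (N + 1) (by omega)]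
      exact ih
  have heP1 : ∫⁻ ω, ind 1 ω * (ω 1 : ℝ≥0∞) ∂(μ x) = meanK P x := eP_one hμ x
  -- finiteness of the tail sum
  have hsum_le : ∀ N : ℕ, o * ∑ k ∈ Finset.range N, ∫⁻ ω, ind (k + 1) ω ∂(μ x)
      ≤ meanK P x := by
    intro N
    rw [← heP1, ← hkey N]
    exact le_add_self
  have hT_le : o * ∑' k : ℕ, ∫⁻ ω, ind (k + 1) ω ∂(μ x) ≤ meanK P x := by
    rw [ENNReal.tsum_eq_iSup_nat, ENNReal.mul_iSup]
    exact iSup_le hsum_le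
  have hTne : (∑' k : ℕ, ∫⁻ ω, ind (k + 1) ω ∂(μ x)) ≠ ⊤ := by
    intro h
    rw [h, ENNReal.mul_top ho0] at hT_le
    exact hmtop (top_le_iff.mp hT_le)
  have hptend : Tendsto (fun k => ∫⁻ ω, ind (k + 1) ω ∂(μ x)) atTop (𝓝 0) :=
    ENNReal.tendsto_atTop_zero_of_tsum_ne_top hTne
  -- the survival event has measure zero
  have hSmeas : MeasurableSet {ω : ℕ → ℕ | ∀ k, 1 ≤ k → ω k ≠ 0} := by
    have : {ω : ℕ → ℕ | ∀ k, 1 ≤ k → ω k ≠ 0}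
        = ⋂ k, (fun ω : ℕ → ℕ => ω k) ⁻¹' {y : ℕ | 1 ≤ k → y ≠ 0} := by
      ext ω; simp [Set.mem_iInter]
    rw [this]
    exact MeasurableSet.iInter
      (fun k => (measurable_pi_apply k) MeasurableSet.of_discrete)
  have hSnull : μ x {ω : ℕ → ℕ | ∀ k, 1 ≤ k → ω k ≠ 0} = 0 := by
    have hle : ∀ n : ℕ, μ x {ω : ℕ → ℕ | ∀ k, 1 ≤ k → ω k ≠ 0}
        ≤ ∫⁻ ω, ind (n + 1) ω ∂(μ x) := by
      intro n
      rw [← lintegral_indicator_one hSmeas]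
      refine lintegral_mono (fun ω => ?_)
      by_cases hω : ω ∈ {ω : ℕ → ℕ | ∀ k, 1 ≤ k → ω k ≠ 0}
      · rw [Set.indicator_of_mem hω, ind_one (fun k hk1 _ => hω k hk1)]
        exact le_rfl
      · rw [Set.indicator_of_notMem hω]
        exact zero_le
    exact le_antisymm (ge_of_tendsto' hptend hle) zero_le
  -- dominated convergence
  have hbint : (∫⁻ ω, ((ω 1 : ℕ) : ℝ≥0∞)
      + ∑' k : ℕ, ind (k + 1) ω * ((ω (k + 2) + 1 - ω (k + 1) : ℕ) : ℝ≥0∞) ∂(μ x)) ≠ ⊤ := by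
    rw [lintegral_add_left (meas_coord 1)]
    have h1 : ∫⁻ ω, ((ω 1 : ℕ) : ℝ≥0∞) ∂(μ x) = meanK P x := by
      rw [← heP1]
      refine lintegral_congr (fun ω => ?_)
      by_cases hω : ω 1 = 0
      · rw [hω]; simp
      · rw [ind_one (fun k hk1 hk2 => by
          have hk : k = 1 := by omega
          rw [hk]; exact hω), one_mul]
    have h2 : ∫⁻ ω, ∑' k : ℕ, ind (k + 1) ω * ((ω (k + 2) + 1 - ω (k + 1) : ℕ) : ℝ≥0∞) ∂(μ x)
        = r * ∑' k : ℕ, ∫⁻ ω, ind (k + 1) ω ∂(μ x) := by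
      have hminc : ∀ k : ℕ, Measurable (fun ω : ℕ → ℕ =>
          ind (k + 1) ω * ((ω (k + 2) + 1 - ω (k + 1) : ℕ) : ℝ≥0∞)) := by
        intro k
        refine (meas_ind (k + 1)).mul ?_
        exact Measurable.comp (g := fun v : ℕ × ℕ => ((v.1 + 1 - v.2 : ℕ) : ℝ≥0∞))
          (f := fun ω : ℕ → ℕ => (ω (k + 2), ω (k + 1))) (measurable_of_countable _)
          ((measurable_pi_apply (k + 2)).prodMk (measurable_pi_apply (k + 1)))
      rw [lintegral_tsum (fun k => (hminc k).aemeasurable)]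
      rw [tsum_congr (fun k => inc_bound ha hsummable hP hμ x k), ENNReal.tsum_mul_left]
    rw [h1, h2]
    exact ENNReal.add_ne_top.mpr ⟨hmtop, ENNReal.mul_ne_top hrT hTne⟩
  have hDC : Tendsto (fun N => ∫⁻ ω, ind (N + 1) ω * (ω (N + 1) : ℝ≥0∞) ∂(μ x)) atTop (𝓝 0) := by
    have h0 : (0 : ℝ≥0∞) = ∫⁻ (_ : ℕ → ℕ), 0 ∂(μ x) := by simp
    rw [h0]
    refine tendsto_lintegral_of_dominated_convergence _
      (fun N => (meas_ind (N + 1)).mul (meas_coord (N + 1)))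
      (fun N => ae_of_all _ (fun ω => dom ω N)) hbint ?_
    have hae : ∀ᵐ ω ∂(μ x), ¬ (∀ k, 1 ≤ k → ω k ≠ 0) := by
      rw [ae_iff]
      simpa [not_not] using hSnull
    filter_upwards [hae] with ω hω
    push_neg at hω
    obtain ⟨k0, hk01, hk00⟩ := hω
    refine tendsto_atTop_of_eventually_const (i₀ := k0) (fun n hn => ?_)
    rw [ind_zero (fun hall => hall k0 hk01 (by omega) hk00), zero_mul]
  -- pass to the limit
  have h1 : Tendsto (fun N => (∫⁻ ω, ind (N + 1) ω * (ω (N + 1) : ℝ≥0∞) ∂(μ x))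
      + o * ∑ k ∈ Finset.range N, ∫⁻ ω, ind (k + 1) ω ∂(μ x)) atTop
      (𝓝 (0 + o * ∑' k : ℕ, ∫⁻ ω, ind (k + 1) ω ∂(μ x))) :=
    hDC.add (ENNReal.Tendsto.const_mul (ENNReal.tendsto_nat_tsum _) (Or.inr hoT))
  have h2 : Tendsto (fun N => (∫⁻ ω, ind (N + 1) ω * (ω (N + 1) : ℝ≥0∞) ∂(μ x))
      + o * ∑ k ∈ Finset.range N, ∫⁻ ω, ind (k + 1) ω ∂(μ x)) atTop
      (𝓝 (∫⁻ ω, ind 1 ω * (ω 1 : ℝ≥0∞) ∂(μ x))) := by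
    simp only [hkey]
    exact tendsto_const_nhds
  have heq : meanK P x = o * ∑' k : ℕ, ∫⁻ ω, ind (k + 1) ω ∂(μ x) := by
    have hu := tendsto_nhds_unique h2 h1
    rw [zero_add] at hu
    rw [← heP1, hu]
  -- expected return time as a sum
  have hret : ∫⁻ ω, ((ret ω : ℕ∞) : ℝ≥0∞) ∂(μ x) = ∑' n : ℕ, ∫⁻ ω, ind n ω ∂(μ x) := by
    rw [lintegral_congr retsum, lintegral_tsum (fun n => (meas_ind n).aemeasurable)]
  have hsplit : ∑' n : ℕ, ∫⁻ ω, ind n ω ∂(μ x)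
      = 1 + ∑' n : ℕ, ∫⁻ ω, ind (n + 1) ω ∂(μ x) := by
    rw [tsum_eq_zero_add' ENNReal.summable, pP_zero hμ x]
  rw [hret, hsplit, mul_add, mul_one, ← heq]

end Master

end Stmt19Aux


/-- for the embedded M/G/1 queue with `ρ = Σ j·a_j < 1`,
`E_x[τ₀] = x/(1-ρ)` for `x ≥ 1`, and `E_0[τ₀] = 1/(1-ρ)`. -/
theorem stmt19 (a : ℕ → ℝ) (ha : ∀ j, 0 ≤ a j) (hsum : ∑' j, a j = 1)
    (hsummable : Summable fun j => ((j : ℕ) : ℝ) * a j) (hρ : (∑' j : ℕ, (j : ℝ) * a j) < 1)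
    (P : Kernel ℕ ℕ) [IsMarkovKernel P]
    (hP0 : ∀ y : ℕ, P 0 {y} = ENNReal.ofReal (a y))
    (hP : ∀ x : ℕ, 1 ≤ x → ∀ y : ℕ,
      P x {y} = if x ≤ y + 1 then ENNReal.ofReal (a (y + 1 - x)) else 0)
    (μ : ℕ → Measure (ℕ → ℕ)) (hμ : IsMarkovChain P μ) :
    (∀ x : ℕ, 1 ≤ x →
      ∫⁻ ω, (ret ω : ℝ≥0∞) ∂(μ x) =
        ENNReal.ofReal ((x : ℝ) / (1 - ∑' j : ℕ, (j : ℝ) * a j))) ∧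
    ∫⁻ ω, (ret ω : ℝ≥0∞) ∂(μ 0) =
      ENNReal.ofReal (1 / (1 - ∑' j : ℕ, (j : ℝ) * a j)) := by
  have hρ0 : 0 ≤ ∑' j : ℕ, (j : ℝ) * a j :=
    tsum_nonneg (fun j => mul_nonneg (Nat.cast_nonneg j) (ha j))
  have ho0 : ENNReal.ofReal (1 - ∑' j : ℕ, (j : ℝ) * a j) ≠ 0 :=
    (ENNReal.ofReal_pos.mpr (by linarith)).ne'
  have hoT : ENNReal.ofReal (1 - ∑' j : ℕ, (j : ℝ) * a j) ≠ ⊤ := ENNReal.ofReal_ne_top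
  constructor
  · intro x hx
    have hmean := Stmt19Aux.kmean1 ha hsum hsummable hρ hP x hx
    have hmtop : Stmt19Aux.meanK P x ≠ ⊤ := by
      intro h
      rw [show Stmt19Aux.meanK P x = ∫⁻ z, (z : ℝ≥0∞) ∂(P x) from rfl] at h
      rw [h, top_add] at hmean
      exact (ENNReal.natCast_ne_top x) hmean.symm
    have hm := Stmt19Aux.master ha hsum hsummable hρ hP hμ x hmtop
    have hxeq : ENNReal.ofReal (1 - ∑' j : ℕ, (j : ℝ) * a j)
        * ∫⁻ ω, (ret ω : ℝ≥0∞) ∂(μ x) = (x : ℝ≥0∞) := by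
      rw [hm, add_comm]
      exact hmean
    rw [(ENNReal.eq_div_iff ho0 hoT).mpr hxeq,
      ENNReal.ofReal_div_of_pos (by linarith), ENNReal.ofReal_natCast]
  · have hmean0 : Stmt19Aux.meanK P 0
        = ENNReal.ofReal (∑' j : ℕ, (j : ℝ) * a j) :=
      Stmt19Aux.kmean0 ha hsummable hP0
    have hmtop : Stmt19Aux.meanK P 0 ≠ ⊤ := by
      rw [hmean0]; exact ENNReal.ofReal_ne_top
    have hm := Stmt19Aux.master ha hsum hsummable hρ hP hμ 0 hmtop
    have hone : ENNReal.ofReal (1 - ∑' j : ℕ, (j : ℝ) * a j)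
        * ∫⁻ ω, (ret ω : ℝ≥0∞) ∂(μ 0) = 1 := by
      rw [hm, hmean0, ← ENNReal.ofReal_add (by linarith) hρ0]
      norm_num
    rw [(ENNReal.eq_div_iff ho0 hoT).mpr hone,
      ENNReal.ofReal_div_of_pos (by linarith), ENNReal.ofReal_one]
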